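/- arXiv:math/0410473 — 6 statements merged into one kernel-verified Lean document; each statement's English description precedes it below -/
import Mathlib

section
/- The linear map f on sl(2,1) defined on the basis by f(E11+E33)=0, f(E22+E33)=E22+E33, f(E21)=0, f(E12)=E12, f(E23)=0, f(E13)=E13, f(E31)=-E13, f(E32)=E23+E32 satisfies the functional equation (f-1)[f(x),f(y)] = f([(f-1)(x),(f-1)(y)]) for all x, y in sl(2,1). -/
/- ## The Lie superalgebra sl(2,1) as 3x3 supermatrices (grading 2|1) over ℚ -/

abbrev M3 := Matrix (Fin 3) (Fin 3) ℚ

/-- sign (-1)^b -/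
def sgn (b : Bool) : ℚ := if b then -1 else 1

/-- parity of the index i (grading 2|1): rows/columns 0,1 even, 2 odd -/
def σ3 (i : Fin 3) : Bool := decide (i = (2 : Fin 3))

/-- parity of the matrix unit E i j -/
def pi3 (i j : Fin 3) : Bool := σ3 i != σ3 j

/-- even part of a supermatrix -/
def evM (m : M3) : M3 := Matrix.of (fun i j => if σ3 i = σ3 j then m i j else 0)

/-- odd part of a supermatrix -/
def odM (m : M3) : M3 := Matrix.of (fun i j => if σ3 i = σ3 j then 0 else m i j)

/-- the super commutator, i.e. the bilinear extension of
    [x,y] = xy - (-1)^{|x||y|} yx on homogeneous elements -/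
def sbr (x y : M3) : M3 := x * y - (evM y * x + odM y * evM x - odM y * odM x)

/-- matrix units -/
def Eu (i j : Fin 3) : M3 := Matrix.single i j 1

/-- E11 + E33 (0-indexed: E00 + E22) -/
def A3 : M3 := Eu 0 0 + Eu 2 2

/-- E22 + E33 (0-indexed: E11 + E22) -/
def B3 : M3 := Eu 1 1 + Eu 2 2

/-- the supertrace -/
def str (m : M3) : ℚ := m 0 0 + m 1 1 - m 2 2

/-- sl(2,1): supermatrices with supertrace zero -/
def sl21 : Submodule ℚ M3 where
  carrier := {m | str m = 0}
  add_mem' := by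
    intro a b ha hb
    simp only [Set.mem_setOf_eq, str, Matrix.add_apply] at *
    linarith
  zero_mem' := by simp [str]
  smul_mem' := by
    intro c m hm
    simp only [Set.mem_setOf_eq, str, Matrix.smul_apply, smul_eq_mul] at *
    linear_combination c * hm

/-- m is homogeneous of parity p -/
def homogM (m : M3) (p : Bool) : Prop := m = (if p then odM m else evM m)

/- ## Tensors: g ⊗ g realized as 4-index arrays -/

abbrev T3 := Fin 3 → Fin 3 → Fin 3 → Fin 3 → ℚ

/-- a ⊗ b -/
def tm (a b : M3) : T3 := fun i j k l => a i j * b k l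

/-- the super permutation map T_s(a ⊗ b) = (-1)^{|a||b|} b ⊗ a -/
def TsM (t : T3) : T3 := fun i j k l => sgn (pi3 i j && pi3 k l) * t k l i j

/-- a ∧ b = a ⊗ b - (-1)^{|a||b|} b ⊗ a -/
def wdg (a b : M3) : T3 := tm a b - TsM (tm a b)

/-- the Casimir 2-tensor Ω of sl(2,1) -/
def Omega : T3 :=
  tm A3 (-B3) + tm (-B3) A3 + tm (Eu 0 1) (Eu 1 0) + tm (Eu 1 0) (Eu 0 1)
  - tm (Eu 0 2) (Eu 2 0) + tm (Eu 2 0) (Eu 0 2) - tm (Eu 1 2) (Eu 2 1) + tm (Eu 2 1) (Eu 1 2)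

/-- the r-matrix r(f) -/
def rf : T3 :=
  tm (-B3) A3 + tm (Eu 0 1) (Eu 1 0) - tm (Eu 0 2) (Eu 2 0)
  + tm (Eu 2 1) (Eu 1 2) - tm (Eu 0 2) (Eu 0 2) + tm (Eu 1 2) (Eu 1 2)

/-- the standard r-matrix r_s -/
def rs : T3 :=
  tm (-B3) A3 + tm (Eu 0 1) (Eu 1 0) - tm (Eu 0 2) (Eu 2 0) + tm (Eu 2 1) (Eu 1 2)

/-- the super adjoint action of g on g ⊗ g:
    g · (a ⊗ b) = [g,a] ⊗ b + (-1)^{|g||a|} a ⊗ [g,b]  (= [g⊗1 + 1⊗g, t]) -/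
def act (g : M3) (t : T3) : T3 := fun i j k l =>
  sbr g (Matrix.of (fun a b => t a b k l)) i j
  + sbr (evM g) (Matrix.of (fun a b => t i j a b)) k l
  + sgn (pi3 i j) * sbr (odM g) (Matrix.of (fun a b => t i j a b)) k l

/-- the cocommutator δ_f(g) = [g⊗1 + 1⊗g, r(f)] -/
def δf (g : M3) : T3 := act g rf

/-- the standard cocommutator δ_s(g) = [g⊗1 + 1⊗g, r_s] -/
def δs (g : M3) : T3 := act g rs

/-- the linear map f defining r(f) -/
def fmap (m : M3) : M3 :=
  m 1 1 • B3 + m 0 1 • Eu 0 1 + (m 0 2 - m 2 0) • Eu 0 2 + m 2 1 • (Eu 1 2 + Eu 2 1)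

/- ## Distinguished subalgebras -/

def S1 : Submodule ℚ M3 := Submodule.span ℚ {A3, Eu 1 0, Eu 1 2, Eu 0 2 + Eu 2 0}
def S2 : Submodule ℚ M3 := Submodule.span ℚ {B3, Eu 0 1, Eu 0 2, Eu 1 2 + Eu 2 1}
def T1 : Submodule ℚ M3 := Submodule.span ℚ {A3, Eu 1 0, Eu 1 2, Eu 2 0}
def T2 : Submodule ℚ M3 := Submodule.span ℚ {B3, Eu 0 1, Eu 0 2, Eu 2 1}

/-- S1 ⊗ S1 inside T3 -/
def TS1 : Submodule ℚ T3 := Submodule.span ℚ {t : T3 | ∃ a ∈ S1, ∃ b ∈ S1, t = tm a b}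
/-- S2 ⊗ S2 inside T3 -/
def TS2 : Submodule ℚ T3 := Submodule.span ℚ {t : T3 | ∃ a ∈ S2, ∃ b ∈ S2, t = tm a b}

/- ## The abstract 4-dimensional Lie superalgebras s and t
     basis: e0 = h, e1 = x (even), e2 = y1, e3 = y2 (odd) -/

abbrev V4 := Fin 4 → ℚ

/-- parity of the basis vectors of s (h, x even; y1, y2 odd) -/
def pV (i : Fin 4) : Bool := decide (2 ≤ i.val)

/-- basis vectors -/
def eV (i : Fin 4) : V4 := fun j => if j = i then 1 else 0

/-- structure constants of s: [h,x] = -x, [h,y1] = -y1, [x,y2] = y1,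
    [y1,y2] = x, [y2,y2] = 2h (and super-antisymmetric partners) -/
def cS : Fin 4 → Fin 4 → V4 :=
  ![![0, -eV 1, -eV 2, 0],
    ![eV 1, 0, 0, eV 2],
    ![eV 2, 0, 0, eV 1],
    ![0, -eV 2, eV 1, (2 : ℚ) • eV 0]]

/-- the bracket of s -/
def brS (u v : V4) : V4 := fun k => ∑ i : Fin 4, ∑ j : Fin 4, u i * v j * cS i j k

/-- structure constants of t: [h,x] = -x, [h,y1] = -y1, [y1,y2] = x -/
def cT : Fin 4 → Fin 4 → V4 :=
  ![![0, -eV 1, -eV 2, 0],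
    ![eV 1, 0, 0, 0],
    ![eV 2, 0, 0, eV 1],
    ![0, 0, eV 1, 0]]

/-- the bracket of t -/
def brT (u v : V4) : V4 := fun k => ∑ i : Fin 4, ∑ j : Fin 4, u i * v j * cT i j k

/-- even part in s -/
def evV (u : V4) : V4 := fun i => if pV i then 0 else u i
/-- odd part in s -/
def odV (u : V4) : V4 := fun i => if pV i then u i else 0
/-- u is homogeneous of parity p -/
def homogV (u : V4) (p : Bool) : Prop := u = (if p then odV u else evV u)

/-- derived series of s -/
def derS : ℕ → Submodule ℚ V4
  | 0 => ⊤
  | n + 1 => Submodule.span ℚ {w : V4 | ∃ u ∈ derS n, ∃ v ∈ derS n, w = brS u v}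

/- ## Tensors over s -/

abbrev TV := Fin 4 → Fin 4 → ℚ
abbrev T3V := Fin 4 → Fin 4 → Fin 4 → ℚ

def tmV (u v : V4) : TV := fun i j => u i * v j
def TsV (t : TV) : TV := fun i j => sgn (pV i && pV j) * t j i
/-- a ∧ b in s ⊗ s -/
def wdgV (u v : V4) : TV := tmV u v - TsV (tmV u v)

/-- the cocommutator δ_1 on s: δ_1(h) = -y1∧y1, δ_1(x) = x∧h - y1∧y2,
    δ_1(y1) = 0, δ_1(y2) = y2∧h + x∧y1 -/
def δ1 (u : V4) : TV :=
  u 0 • (-(wdgV (eV 2) (eV 2)))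
  + u 1 • (wdgV (eV 1) (eV 0) - wdgV (eV 2) (eV 3))
  + u 3 • (wdgV (eV 3) (eV 0) + wdgV (eV 1) (eV 2))

/-- the cocommutator δ_2 on s: δ_2(h) = y1∧y1, δ_2(x) = -(x∧h - y1∧y2),
    δ_2(y1) = 0, δ_2(y2) = -(y2∧h + x∧y1) -/
def δ2 (u : V4) : TV :=
  u 0 • (wdgV (eV 2) (eV 2))
  + u 1 • (-(wdgV (eV 1) (eV 0) - wdgV (eV 2) (eV 3)))
  + u 3 • (-(wdgV (eV 3) (eV 0) + wdgV (eV 1) (eV 2)))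

/-- super pairing ⟨α⊗β, u⊗v⟩ = (-1)^{|β||u|} α(u) β(v), with α, β written in the
    dual basis coordinates -/
def pairV (al be : V4) (t : TV) : ℚ :=
  ∑ i : Fin 4, ∑ j : Fin 4, sgn (pV i && pV j) * al i * be j * t i j

/-- the bracket on s* induced by δ_1: ⟨[α,β], s⟩ = ⟨α⊗β, δ_1(s)⟩ -/
def dbr (al be : V4) : V4 := fun k => pairV al be (δ1 (eV k))

/-- the linear map s* → s given by h* ↦ h, x* ↦ x, y1* ↦ y2, y2* ↦ y1 -/
def θS (al : V4) : V4 := fun k => al (![0, 1, 3, 2] k)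

/-- (δ_1 ⊗ Id) on tensors -/
def d1Id (t : TV) : T3V := fun i j k => ∑ a : Fin 4, δ1 (eV a) i j * t a k

/-- the super cyclic symmetrizer Alt_s on 3-tensors -/
def AltS (t : T3V) : T3V := fun i j k =>
  t i j k + sgn (pV k && (pV i != pV j)) * t k i j + sgn (pV i && (pV j != pV k)) * t j k i

/-- super adjoint action of g ∈ s on s ⊗ s -/
def actV (g : V4) (t : TV) : TV := fun i j =>
  (∑ a : Fin 4, brS g (eV a) i * t a j)
  + (∑ b : Fin 4, t i b * (brS (evV g) (eV b) j + sgn (pV i) * brS (odV g) (eV b) j))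

/- ## identification maps -/

/-- the map s → sl(2,1) inverse to S1 → s, A ↦ -h, E21 ↦ x, E13+E31 ↦ -y2, E23 ↦ y1 -/
def ψ9 (u : V4) : M3 := u 0 • (-A3) + u 1 • Eu 1 0 + u 2 • Eu 1 2 + u 3 • (-(Eu 0 2 + Eu 2 0))

/-- the map s → sl(2,1), h ↦ E22+E33, x ↦ E12, y1 ↦ E13, y2 ↦ E23+E32 -/
def ψ10 (u : V4) : M3 := u 0 • B3 + u 1 • Eu 0 1 + u 2 • Eu 0 2 + u 3 • (Eu 1 2 + Eu 2 1)

/-- the map t → sl(2,1), h ↦ E22+E33, x ↦ E12, y1 ↦ E13, y2 ↦ E32 -/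
def ψ18 (u : V4) : M3 := u 0 • B3 + u 1 • Eu 0 1 + u 2 • Eu 0 2 + u 3 • Eu 2 1

lemma fmap_eta (m : M3) :
    fmap m = !![0, m 0 1, m 0 2 - m 2 0; 0, m 1 1, m 2 1; 0, m 2 1, m 1 1] := by
  funext i j; fin_cases i <;> fin_cases j <;>
    simp [fmap, B3, Eu, Matrix.single, Matrix.vecHead, Matrix.vecTail]

lemma evM_eta (a b c d e f g h k : ℚ) :
    evM !![a,b,c;d,e,f;g,h,k] = !![a,b,0;d,e,0;0,0,k] := by
  funext i j; fin_cases i <;> fin_cases j <;> simp [evM, σ3]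

lemma odM_eta (a b c d e f g h k : ℚ) :
    odM !![a,b,c;d,e,f;g,h,k] = !![0,0,c;0,0,f;g,h,0] := by
  funext i j; fin_cases i <;> fin_cases j <;> simp [odM, σ3]

lemma sbr_eta (a b c d e f g h k a' b' c' d' e' f' g' h' k' : ℚ) :
    sbr !![a,b,c;d,e,f;g,h,k] !![a',b',c';d',e',f';g',h',k'] =
    !![b*d'-b'*d+c*g'+c'*g, a*b'-a'*b+b*e'-b'*e+c*h'+c'*h, a*c'-a'*c+b*f'-b'*f+c*k'-c'*k;
       -a*d'+a'*d-d*e'+d'*e+f*g'+f'*g, -b*d'+b'*d+f*h'+f'*h, -c*d'+c'*d+e*f'-e'*f+f*k'-f'*k;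
       -a*g'+a'*g-d*h'+d'*h-g*k'+g'*k, -b*g'+b'*g-e*h'+e'*h-h*k'+h'*k, c*g'+c'*g+f*h'+f'*h] := by
  rw [sbr, evM_eta, odM_eta, evM_eta, odM_eta]
  rw [Matrix.mul_fin_three, Matrix.mul_fin_three, Matrix.mul_fin_three, Matrix.mul_fin_three]
  funext i j; fin_cases i <;> fin_cases j <;>
    simp [Matrix.vecHead, Matrix.vecTail] <;> ring

lemma fmap_eta' (a b c d e f g h k : ℚ) :
    fmap !![a,b,c;d,e,f;g,h,k] = !![0,b,c-g;0,e,h;0,h,e] := by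
  rw [fmap_eta]; congr 1 <;> simp [Matrix.vecHead, Matrix.vecTail]

lemma sub_eta (a b c d e f g h k a' b' c' d' e' f' g' h' k' : ℚ) :
    !![a,b,c;d,e,f;g,h,k] - !![a',b',c';d',e',f';g',h',k'] =
    !![a-a',b-b',c-c';d-d',e-e',f-f';g-g',h-h',k-k'] := by
  funext i j; fin_cases i <;> fin_cases j <;> simp [Matrix.vecHead, Matrix.vecTail]

lemma stmt0_aux (x y : M3) (hx : x 2 2 = x 0 0 + x 1 1) (hy : y 2 2 = y 0 0 + y 1 1) :
    fmap (sbr (fmap x) (fmap y)) - sbr (fmap x) (fmap y)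
      = fmap (sbr (fmap x - x) (fmap y - y)) := by
  rw [Matrix.eta_fin_three x, Matrix.eta_fin_three y, hx, hy]
  rw [fmap_eta', fmap_eta', sub_eta, sub_eta, sbr_eta, sbr_eta, fmap_eta', fmap_eta', sub_eta]
  funext i j; fin_cases i <;> fin_cases j <;>
    simp [Matrix.vecHead, Matrix.vecTail] <;> ring

/-- f satisfies (f-1)[f(x),f(y)] = f([(f-1)(x),(f-1)(y)]) on sl(2,1) -/
theorem stmt0 : ∀ x y : M3, str x = 0 → str y = 0 →
    fmap (sbr (fmap x) (fmap y)) - sbr (fmap x) (fmap y)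
      = fmap (sbr (fmap x - x) (fmap y - y)) := by
  intro x y hx hy
  simp only [str] at hx hy
  exact stmt0_aux x y (by linarith) (by linarith)
end

section
/- The linear map sending E22+E33 ↦ h, E12 ↦ x, E13 ↦ y1, E23+E32 ↦ y2 is an isomorphism of Lie superalgebras from S2 ⊂ sl(2,1) onto the Lie superalgebra s with nonzero brackets [h,x]=-x, [h,y1]=-y1, [x,y2]=y1, [y1,y2]=x, [y2,y2]=2h. -/
lemma brS_eq (u v : V4) : brS u v =
    ![2 * (u 3 * v 3), -(u 0 * v 1) + u 1 * v 0 + u 2 * v 3 + u 3 * v 2,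
      -(u 0 * v 2) + u 1 * v 3 + u 2 * v 0 - u 3 * v 1, 0] := by
  funext k
  fin_cases k <;>
    simp [brS, Fin.sum_univ_four, cS, eV, Matrix.vecHead, Matrix.vecTail, Function.comp] <;> ring

lemma ψ10_eq (u : V4) : ψ10 u = !![0, u 1, u 2; 0, u 0, u 3; 0, u 3, u 0] := by
  ext i j
  fin_cases i <;> fin_cases j <;>
    simp [ψ10, B3, Eu, Matrix.single, Matrix.vecHead, Matrix.vecTail]

lemma evM_eq' (a b c d e f g h i : ℚ) :
    evM !![a,b,c;d,e,f;g,h,i] = !![a,b,0;d,e,0;0,0,i] := by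
  ext x y
  fin_cases x <;> fin_cases y <;> simp [evM, σ3]

lemma odM_eq' (a b c d e f g h i : ℚ) :
    odM !![a,b,c;d,e,f;g,h,i] = !![0,0,c;0,0,f;g,h,0] := by
  ext x y
  fin_cases x <;> fin_cases y <;> simp [odM, σ3]

lemma ψ10_hom (u v : V4) : ψ10 (brS u v) = sbr (ψ10 u) (ψ10 v) := by
  rw [sbr, ψ10_eq u, ψ10_eq v, ψ10_eq, brS_eq]
  rw [evM_eq', evM_eq', odM_eq', odM_eq', Matrix.mul_fin_three, Matrix.mul_fin_three,
    Matrix.mul_fin_three, Matrix.mul_fin_three]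
  ext x y
  fin_cases x <;> fin_cases y <;>
    simp [Matrix.vecHead, Matrix.vecTail] <;> ring

lemma ψ10_add (u v : V4) : ψ10 (u + v) = ψ10 u + ψ10 v := by
  simp only [ψ10, Pi.add_apply, add_smul]; abel

lemma ψ10_smul (c : ℚ) (u : V4) : ψ10 (c • u) = c • ψ10 u := by
  simp only [ψ10, Pi.smul_apply, smul_eq_mul, mul_smul, smul_add]

/-- the map S2 → s, E22+E33 ↦ h, E12 ↦ x, E13 ↦ y1, E23+E32 ↦ y2
    is an isomorphism of Lie superalgebras (stated via its inverse ψ10 : s → S2) -/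
theorem stmt10 : (∀ u v : V4, ψ10 (brS u v) = sbr (ψ10 u) (ψ10 v)) ∧
    Function.Injective ψ10 ∧ (∀ u : V4, ψ10 u ∈ S2) ∧ (∀ m ∈ S2, ∃ u : V4, ψ10 u = m) := by
  refine ⟨ψ10_hom, ?_, ?_, ?_⟩
  · intro u v h
    rw [ψ10_eq, ψ10_eq] at h
    funext k
    fin_cases k
    · have := congrFun (congrFun h 1) 1; simpa using this
    · have := congrFun (congrFun h 0) 1; simpa using this
    · have := congrFun (congrFun h 0) 2; simpa using this
    · have := congrFun (congrFun h 1) 2; simpa using this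
  · intro u
    refine Submodule.add_mem _ (Submodule.add_mem _ (Submodule.add_mem _ ?_ ?_) ?_) ?_ <;>
      refine Submodule.smul_mem _ _ (Submodule.subset_span ?_)
    · exact Or.inl rfl
    · exact Or.inr (Or.inl rfl)
    · exact Or.inr (Or.inr (Or.inl rfl))
    · exact Or.inr (Or.inr (Or.inr rfl))
  · intro m hm
    induction hm using Submodule.span_induction with
    | mem x hx =>
      rcases hx with rfl | rfl | rfl | rfl
      · exact ⟨eV 0, by funext i j; simp [ψ10, eV]⟩
      · exact ⟨eV 1, by funext i j; simp [ψ10, eV]⟩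
      · exact ⟨eV 2, by funext i j; simp [ψ10, eV]⟩
      · exact ⟨eV 3, by funext i j; simp [ψ10, eV]⟩
    | zero => exact ⟨0, by funext i j; simp [ψ10]⟩
    | add x y hx hy ihx ihy =>
      obtain ⟨u, rfl⟩ := ihx; obtain ⟨v, rfl⟩ := ihy
      exact ⟨u + v, ψ10_add u v⟩
    | smul c x hx ih =>
      obtain ⟨u, rfl⟩ := ih
      exact ⟨c • u, ψ10_smul c u⟩
end

section
/- The bracket on the dual space s* induced by δ_1 via ⟨[α,β], s⟩ = ⟨α⊗β, δ_1(s)⟩ has nonzero values [h*,x*] = -x*, [h*,y2*] = -y2*, [x*,y1*] = y2*, [y1*,y2*] = x*, [y1*,y1*] = 2h*, and the linear map h* ↦ h, x* ↦ x, y1* ↦ y2, y2* ↦ y1 is an isomorphism of Lie superalgebras from s* onto s; in particular (s, δ_1) is a self-dual super Lie bialgebra. -/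
/-- the induced bracket on s* has the listed values, and
    h* ↦ h, x* ↦ x, y1* ↦ y2, y2* ↦ y1 is an isomorphism s* ≅ s; in particular
    (s, δ_1) is a self-dual super Lie bialgebra -/
theorem stmt15 :
    dbr (eV 0) (eV 1) = -eV 1 ∧
    dbr (eV 0) (eV 3) = -eV 3 ∧
    dbr (eV 1) (eV 2) = eV 3 ∧
    dbr (eV 2) (eV 3) = eV 1 ∧
    dbr (eV 2) (eV 2) = (2 : ℚ) • eV 0 ∧
    (∀ al be : V4, θS (dbr al be) = brS (θS al) (θS be)) ∧
    Function.Bijective θS := by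
  have key : ∀ al be : V4, θS (dbr al be) = brS (θS al) (θS be) := by
    intro al be
    funext k
    fin_cases k <;>
      (simp (config := { decide := true }) [θS, dbr, brS, pairV, δ1, wdgV, tmV, TsV, eV, cS,
        pV, sgn, Fin.sum_univ_four, Matrix.vecHead, Matrix.vecTail] <;> ring)
  refine ⟨?_, ?_, ?_, ?_, ?_, key, ?_⟩
  · funext k; fin_cases k <;> simp (config := { decide := true }) [dbr, pairV, δ1, wdgV, tmV, TsV, eV, pV, sgn, Fin.sum_univ_four] <;> norm_num
  · funext k; fin_cases k <;> simp (config := { decide := true }) [dbr, pairV, δ1, wdgV, tmV, TsV, eV, pV, sgn, Fin.sum_univ_four] <;> norm_num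
  · funext k; fin_cases k <;> simp (config := { decide := true }) [dbr, pairV, δ1, wdgV, tmV, TsV, eV, pV, sgn, Fin.sum_univ_four] <;> norm_num
  · funext k; fin_cases k <;> simp (config := { decide := true }) [dbr, pairV, δ1, wdgV, tmV, TsV, eV, pV, sgn, Fin.sum_univ_four] <;> norm_num
  · funext k; fin_cases k <;> simp (config := { decide := true }) [dbr, pairV, δ1, wdgV, tmV, TsV, eV, pV, sgn, Fin.sum_univ_four] <;> norm_num
  · have hinv : ∀ u : V4, θS (θS u) = u := by
      intro u; funext k; fin_cases k <;> rfl
    exact Function.bijective_iff_has_inverse.mpr ⟨θS, hinv, hinv⟩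
end

section
/- The map δ_1 on s satisfies the super coJacobi identity: Alt_s(δ_1 ⊗ Id)(δ_1(z)) = 0 for all z in s, where Alt_s(a⊗b⊗c) = a⊗b⊗c + (-1)^{|a|(|b|+|c|)} b⊗c⊗a + (-1)^{|c|(|a|+|b|)} c⊗a⊗b. -/
/-- table of δ1 on basis vectors -/
def Dm (a i j : Fin 4) : ℚ :=
  if a = 0 then (if i = 2 ∧ j = 2 then -2 else 0)
  else if a = 1 then
    (if i = 0 ∧ j = 1 then -1 else if i = 1 ∧ j = 0 then 1
     else if i = 2 ∧ j = 3 then -1 else if i = 3 ∧ j = 2 then -1 else 0)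
  else if a = 3 then
    (if i = 0 ∧ j = 3 then -1 else if i = 1 ∧ j = 2 then 1
     else if i = 2 ∧ j = 1 then -1 else if i = 3 ∧ j = 0 then 1 else 0)
  else 0

lemma hδ (u : V4) (i j : Fin 4) :
    δ1 u i j = u 0 * Dm 0 i j + u 1 * Dm 1 i j + u 3 * Dm 3 i j := by
  fin_cases i <;> fin_cases j <;>
    norm_num (config := { decide := true }) [δ1, Dm, wdgV, tmV, TsV, eV, pV, sgn]

set_option maxHeartbeats 2000000 in
/-- δ_1 satisfies the super coJacobi identity -/
theorem stmt16 : ∀ z : V4, AltS (d1Id (δ1 z)) = 0 := by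
  intro z
  funext i j k
  simp only [AltS, d1Id, hδ, eV, Fin.sum_univ_four, Pi.zero_apply]
  fin_cases i <;> fin_cases j <;> fin_cases k <;>
    norm_num (config := { decide := true }) [Dm, pV, sgn] <;> ring
end

section
/- The subspaces T1 = span{E11+E33, E21, E23, E31} and T2 = span{E22+E33, E12, E13, E32} are Lie subsuperalgebras of sl(2,1), each isomorphic to the 4-dimensional solvable Lie superalgebra t with even basis h, x, odd basis y1, y2 and nonzero brackets [h,x]=-x, [h,y1]=-y1, [y1,y2]=x, and sl(2,1) = T1 ⊕ T2 as graded vector spaces. -/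
/- ### auxiliary machinery -/

def P1 : Submodule ℚ M3 where
  carrier := {m | m 1 1 = 0 ∧ m 0 1 = 0 ∧ m 0 2 = 0 ∧ m 2 1 = 0 ∧ m 2 2 = m 0 0}
  add_mem' := by
    rintro a b ⟨a1,a2,a3,a4,a5⟩ ⟨b1,b2,b3,b4,b5⟩
    simp_all [Matrix.add_apply]
  zero_mem' := by simp
  smul_mem' := by
    rintro c m ⟨a1,a2,a3,a4,a5⟩
    simp_all [Matrix.smul_apply]

def P2 : Submodule ℚ M3 where
  carrier := {m | m 0 0 = 0 ∧ m 1 0 = 0 ∧ m 2 0 = 0 ∧ m 1 2 = 0 ∧ m 2 2 = m 1 1}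
  add_mem' := by
    rintro a b ⟨a1,a2,a3,a4,a5⟩ ⟨b1,b2,b3,b4,b5⟩
    simp_all [Matrix.add_apply]
  zero_mem' := by simp
  smul_mem' := by
    rintro c m ⟨a1,a2,a3,a4,a5⟩
    simp_all [Matrix.smul_apply]

lemma T1_eq : T1 = P1 := by
  apply le_antisymm
  · rw [T1, Submodule.span_le]
    intro x hx
    simp only [Set.mem_insert_iff, Set.mem_singleton_iff] at hx
    rcases hx with rfl|rfl|rfl|rfl <;>
      refine ⟨?_,?_,?_,?_,?_⟩ <;>
        simp [A3, Eu, Matrix.single, Matrix.add_apply]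
  · rintro m ⟨a1,a2,a3,a4,a5⟩
    have : m = m 0 0 • A3 + m 1 0 • Eu 1 0 + m 1 2 • Eu 1 2 + m 2 0 • Eu 2 0 := by
      funext i j
      fin_cases i <;> fin_cases j <;>
        simp_all [A3, Eu, Matrix.single, Matrix.add_apply, Matrix.smul_apply]
    rw [this]
    have h : ∀ z ∈ ({A3, Eu 1 0, Eu 1 2, Eu 2 0} : Set M3), z ∈ T1 :=
      fun z hz => Submodule.subset_span hz
    exact add_mem (add_mem (add_mem
      (Submodule.smul_mem _ _ (h _ (by simp)))
      (Submodule.smul_mem _ _ (h _ (by simp))))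
      (Submodule.smul_mem _ _ (h _ (by simp))))
      (Submodule.smul_mem _ _ (h _ (by simp)))

lemma T2_eq : T2 = P2 := by
  apply le_antisymm
  · rw [T2, Submodule.span_le]
    intro x hx
    simp only [Set.mem_insert_iff, Set.mem_singleton_iff] at hx
    rcases hx with rfl|rfl|rfl|rfl <;>
      refine ⟨?_,?_,?_,?_,?_⟩ <;>
        simp [B3, Eu, Matrix.single, Matrix.add_apply]
  · rintro m ⟨a1,a2,a3,a4,a5⟩
    have : m = m 1 1 • B3 + m 0 1 • Eu 0 1 + m 0 2 • Eu 0 2 + m 2 1 • Eu 2 1 := by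
      funext i j
      fin_cases i <;> fin_cases j <;>
        simp_all [B3, Eu, Matrix.single, Matrix.add_apply, Matrix.smul_apply]
    rw [this]
    have h : ∀ z ∈ ({B3, Eu 0 1, Eu 0 2, Eu 2 1} : Set M3), z ∈ T2 :=
      fun z hz => Submodule.subset_span hz
    exact add_mem (add_mem (add_mem
      (Submodule.smul_mem _ _ (h _ (by simp)))
      (Submodule.smul_mem _ _ (h _ (by simp))))
      (Submodule.smul_mem _ _ (h _ (by simp))))
      (Submodule.smul_mem _ _ (h _ (by simp)))

lemma sbr_mem_P1 : ∀ x ∈ P1, ∀ y ∈ P1, sbr x y ∈ P1 := by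
  rintro x ⟨a1,a2,a3,a4,a5⟩ y ⟨b1,b2,b3,b4,b5⟩
  refine ⟨?_,?_,?_,?_,?_⟩ <;>
    (simp [sbr, evM, odM, Matrix.mul_apply, Matrix.sub_apply, Matrix.add_apply,
      Fin.sum_univ_three, σ3, a1,a2,a3,a4,a5,b1,b2,b3,b4,b5]; try ring)

lemma sbr_mem_P2 : ∀ x ∈ P2, ∀ y ∈ P2, sbr x y ∈ P2 := by
  rintro x ⟨a1,a2,a3,a4,a5⟩ y ⟨b1,b2,b3,b4,b5⟩
  refine ⟨?_,?_,?_,?_,?_⟩ <;>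
    (simp [sbr, evM, odM, Matrix.mul_apply, Matrix.sub_apply, Matrix.add_apply,
      Fin.sum_univ_three, σ3, a1,a2,a3,a4,a5,b1,b2,b3,b4,b5]; try ring)

def ψ17 (u : V4) : M3 := u 0 • A3 + u 1 • Eu 1 0 + u 2 • Eu 1 2 + u 3 • Eu 2 0

lemma brT0 (u v : V4) : brT u v 0 = 0 := by
  simp [brT, cT, eV, Fin.sum_univ_four]
lemma brT1 (u v : V4) : brT u v 1 = u 1 * v 0 - u 0 * v 1 + u 2 * v 3 + u 3 * v 2 := by
  simp [brT, cT, eV, Fin.sum_univ_four, Matrix.vecHead, Matrix.vecTail, Function.comp]; ring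
lemma brT2 (u v : V4) : brT u v 2 = u 2 * v 0 - u 0 * v 2 := by
  simp [brT, cT, eV, Fin.sum_univ_four, Matrix.vecHead, Matrix.vecTail, Function.comp]; ring
lemma brT3 (u v : V4) : brT u v 3 = 0 := by
  simp [brT, cT, eV, Fin.sum_univ_four]

lemma ψ18_hom : ∀ u v : V4, ψ18 (brT u v) = sbr (ψ18 u) (ψ18 v) := by
  intro u v
  funext i j
  fin_cases i <;> fin_cases j <;>
    (simp [ψ18, brT0, brT1, brT2, brT3, sbr, evM, odM, B3, Eu, Matrix.single,
      Matrix.mul_apply, Fin.sum_univ_three, σ3,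
      Matrix.smul_apply, Matrix.add_apply, Matrix.sub_apply, Matrix.of_apply,
      smul_eq_mul]; try ring)

lemma ψ17_hom : ∀ u v : V4, ψ17 (brT u v) = sbr (ψ17 u) (ψ17 v) := by
  intro u v
  funext i j
  fin_cases i <;> fin_cases j <;>
    (simp [ψ17, brT0, brT1, brT2, brT3, sbr, evM, odM, A3, Eu, Matrix.single,
      Matrix.mul_apply, Fin.sum_univ_three, σ3,
      Matrix.smul_apply, Matrix.add_apply, Matrix.sub_apply, Matrix.of_apply,
      smul_eq_mul]; try ring)

lemma ψ18_inj : Function.Injective ψ18 := by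
  intro u v h
  have h0 := congrFun (congrFun h 1) 1
  have h1 := congrFun (congrFun h 0) 1
  have h2 := congrFun (congrFun h 0) 2
  have h3 := congrFun (congrFun h 2) 1
  simp [ψ18, B3, Eu, Matrix.single, Matrix.add_apply, Matrix.smul_apply] at h0 h1 h2 h3
  funext k
  fin_cases k <;> assumption

lemma ψ17_inj : Function.Injective ψ17 := by
  intro u v h
  have h0 := congrFun (congrFun h 0) 0
  have h1 := congrFun (congrFun h 1) 0
  have h2 := congrFun (congrFun h 1) 2
  have h3 := congrFun (congrFun h 2) 0
  simp [ψ17, A3, Eu, Matrix.single, Matrix.add_apply, Matrix.smul_apply] at h0 h1 h2 h3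
  funext k
  fin_cases k <;> assumption

lemma ψ18_mem : ∀ u : V4, ψ18 u ∈ T2 := by
  intro u
  rw [T2_eq]
  refine ⟨?_,?_,?_,?_,?_⟩ <;>
    simp [ψ18, B3, Eu, Matrix.single, Matrix.add_apply, Matrix.smul_apply]

lemma ψ17_mem : ∀ u : V4, ψ17 u ∈ T1 := by
  intro u
  rw [T1_eq]
  refine ⟨?_,?_,?_,?_,?_⟩ <;>
    simp [ψ17, A3, Eu, Matrix.single, Matrix.add_apply, Matrix.smul_apply]

lemma ψ18_surj : ∀ m ∈ T2, ∃ u : V4, ψ18 u = m := by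
  intro m hm
  rw [T2_eq] at hm
  obtain ⟨a1,a2,a3,a4,a5⟩ := hm
  refine ⟨![m 1 1, m 0 1, m 0 2, m 2 1], ?_⟩
  funext i j
  fin_cases i <;> fin_cases j <;>
    simp_all [ψ18, B3, Eu, Matrix.single, Matrix.add_apply, Matrix.smul_apply]

lemma ψ17_surj : ∀ m ∈ T1, ∃ u : V4, ψ17 u = m := by
  intro m hm
  rw [T1_eq] at hm
  obtain ⟨a1,a2,a3,a4,a5⟩ := hm
  refine ⟨![m 0 0, m 1 0, m 1 2, m 2 0], ?_⟩
  funext i j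
  fin_cases i <;> fin_cases j <;>
    simp_all [ψ17, A3, Eu, Matrix.single, Matrix.add_apply, Matrix.smul_apply]

/-- T1 and T2 are subsuperalgebras of sl(2,1), each isomorphic to the
    solvable Lie superalgebra t (the explicit isomorphism for T2 being
    E22+E33 ↦ h, E12 ↦ x, E13 ↦ y1, E32 ↦ y2), and sl(2,1) = T1 ⊕ T2 -/
theorem stmt18 :
    (∀ x ∈ T1, ∀ y ∈ T1, sbr x y ∈ T1) ∧
    (∀ x ∈ T2, ∀ y ∈ T2, sbr x y ∈ T2) ∧
    (∀ u v : V4, ψ18 (brT u v) = sbr (ψ18 u) (ψ18 v)) ∧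
    Function.Injective ψ18 ∧
    (∀ u : V4, ψ18 u ∈ T2) ∧ (∀ m ∈ T2, ∃ u : V4, ψ18 u = m) ∧
    (∃ ψ : V4 → M3, (∀ (c : ℚ) (u : V4), ψ (c • u) = c • ψ u) ∧
      (∀ u v : V4, ψ (u + v) = ψ u + ψ v) ∧
      (∀ u v : V4, ψ (brT u v) = sbr (ψ u) (ψ v)) ∧
      Function.Injective ψ ∧
      (∀ u : V4, ψ u ∈ T1) ∧ (∀ m ∈ T1, ∃ u : V4, ψ u = m)) ∧
    T1 ⊓ T2 = ⊥ ∧ T1 ⊔ T2 = sl21 := by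
  refine ⟨by rw [T1_eq]; exact sbr_mem_P1, by rw [T2_eq]; exact sbr_mem_P2,
    ψ18_hom, ψ18_inj, ψ18_mem, ψ18_surj,
    ⟨ψ17, ?_, ?_, ψ17_hom, ψ17_inj, ψ17_mem, ψ17_surj⟩, ?_, ?_⟩
  · intro c u
    funext i j
    fin_cases i <;> fin_cases j <;>
      simp [ψ17, A3, Eu, Matrix.single, Matrix.add_apply, Matrix.smul_apply,
        Pi.smul_apply, smul_eq_mul] <;> try ring
  · intro u v
    funext i j
    fin_cases i <;> fin_cases j <;>
      simp [ψ17, A3, Eu, Matrix.single, Matrix.add_apply, Matrix.smul_apply,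
        Pi.add_apply] <;> try ring
  · rw [T1_eq, T2_eq, eq_bot_iff]
    rintro m ⟨⟨a1,a2,a3,a4,a5⟩, ⟨b1,b2,b3,b4,b5⟩⟩
    simp only [Submodule.mem_bot]
    funext i j
    fin_cases i <;> fin_cases j <;> simp_all
  · apply le_antisymm
    · refine sup_le ?_ ?_
      · rw [T1, Submodule.span_le]
        intro x hx
        simp only [Set.mem_insert_iff, Set.mem_singleton_iff] at hx
        rcases hx with rfl|rfl|rfl|rfl <;>
          (show str _ = 0; simp [str, A3, Eu, Matrix.single, Matrix.add_apply])
      · rw [T2, Submodule.span_le]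
        intro x hx
        simp only [Set.mem_insert_iff, Set.mem_singleton_iff] at hx
        rcases hx with rfl|rfl|rfl|rfl <;>
          (show str _ = 0; simp [str, B3, Eu, Matrix.single, Matrix.add_apply])
    · intro m hm
      have hstr : str m = 0 := hm
      rw [Submodule.mem_sup]
      refine ⟨m 0 0 • A3 + m 1 0 • Eu 1 0 + m 1 2 • Eu 1 2 + m 2 0 • Eu 2 0, ?_,
              m 1 1 • B3 + m 0 1 • Eu 0 1 + m 0 2 • Eu 0 2 + m 2 1 • Eu 2 1, ?_, ?_⟩
      · have h : ∀ z ∈ ({A3, Eu 1 0, Eu 1 2, Eu 2 0} : Set M3), z ∈ T1 :=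
          fun z hz => Submodule.subset_span hz
        exact add_mem (add_mem (add_mem
          (Submodule.smul_mem _ _ (h _ (by simp)))
          (Submodule.smul_mem _ _ (h _ (by simp))))
          (Submodule.smul_mem _ _ (h _ (by simp))))
          (Submodule.smul_mem _ _ (h _ (by simp)))
      · have h : ∀ z ∈ ({B3, Eu 0 1, Eu 0 2, Eu 2 1} : Set M3), z ∈ T2 :=
          fun z hz => Submodule.subset_span hz
        exact add_mem (add_mem (add_mem
          (Submodule.smul_mem _ _ (h _ (by simp)))
          (Submodule.smul_mem _ _ (h _ (by simp))))
          (Submodule.smul_mem _ _ (h _ (by simp))))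
          (Submodule.smul_mem _ _ (h _ (by simp)))
      · simp only [str] at hstr
        funext i j
        fin_cases i <;> fin_cases j <;>
          simp [A3, B3, Eu, Matrix.single, Matrix.add_apply, Matrix.smul_apply] <;>
          linarith
end

section
/- The standard cocommutator δ_s(g) = [g⊗1+1⊗g, r_s] on sl(2,1), with r_s = (-E22-E33)⊗(E11+E33) + E12⊗E21 - E13⊗E31 + E32⊗E23, satisfies: δ_s(E11+E33)=0, δ_s(E22+E33)=0, δ_s(E21)=E21∧(E11+E33) - E23∧E31, δ_s(E12)=E12∧(-E22-E33)+E13∧E32, δ_s(E23)=0, δ_s(E13)=0, δ_s(E31)=E31∧(E11+E33), δ_s(E32)=E32∧(-E22-E33); moreover r_s + T_s(r_s) = Ω. -/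
/- ## Auxiliary: integer clones for kernel computation -/

section IntClones

abbrev M3Z := Matrix (Fin 3) (Fin 3) ℤ
abbrev T3Z := Fin 3 → Fin 3 → Fin 3 → Fin 3 → ℤ

def sgnZ (b : Bool) : ℤ := if b then -1 else 1
def evMZ (m : M3Z) : M3Z := Matrix.of (fun i j => if σ3 i = σ3 j then m i j else 0)
def odMZ (m : M3Z) : M3Z := Matrix.of (fun i j => if σ3 i = σ3 j then 0 else m i j)
def sbrZ (x y : M3Z) : M3Z := x * y - (evMZ y * x + odMZ y * evMZ x - odMZ y * odMZ x)
def EuZ (i j : Fin 3) : M3Z := Matrix.single i j 1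
def A3Z : M3Z := EuZ 0 0 + EuZ 2 2
def B3Z : M3Z := EuZ 1 1 + EuZ 2 2
def tmZ (a b : M3Z) : T3Z := fun i j k l => a i j * b k l
def TsMZ (t : T3Z) : T3Z := fun i j k l => sgnZ (pi3 i j && pi3 k l) * t k l i j
def wdgZ (a b : M3Z) : T3Z := tmZ a b - TsMZ (tmZ a b)
def OmegaZ : T3Z :=
  tmZ A3Z (-B3Z) + tmZ (-B3Z) A3Z + tmZ (EuZ 0 1) (EuZ 1 0) + tmZ (EuZ 1 0) (EuZ 0 1)
  - tmZ (EuZ 0 2) (EuZ 2 0) + tmZ (EuZ 2 0) (EuZ 0 2) - tmZ (EuZ 1 2) (EuZ 2 1)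
  + tmZ (EuZ 2 1) (EuZ 1 2)
def rsZ : T3Z :=
  tmZ (-B3Z) A3Z + tmZ (EuZ 0 1) (EuZ 1 0) - tmZ (EuZ 0 2) (EuZ 2 0) + tmZ (EuZ 2 1) (EuZ 1 2)
def actZ (g : M3Z) (t : T3Z) : T3Z := fun i j k l =>
  sbrZ g (Matrix.of (fun a b => t a b k l)) i j
  + sbrZ (evMZ g) (Matrix.of (fun a b => t i j a b)) k l
  + sgnZ (pi3 i j) * sbrZ (odMZ g) (Matrix.of (fun a b => t i j a b)) k l

/-- entrywise cast of a matrix -/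
def zcM (m : M3Z) : M3 := Matrix.of fun i j => ((m i j : ℤ) : ℚ)
/-- entrywise cast of a 4-tensor -/
def zcT (t : T3Z) : T3 := fun i j k l => ((t i j k l : ℤ) : ℚ)

lemma sgn_cast (b : Bool) : sgn b = ((sgnZ b : ℤ) : ℚ) := by cases b <;> simp [sgn, sgnZ]

lemma evM_cast (m : M3Z) : evM (zcM m) = zcM (evMZ m) := by
  funext i j
  simp [evM, evMZ, zcM, apply_ite (fun z : ℤ => (z : ℚ))]

lemma odM_cast (m : M3Z) : odM (zcM m) = zcM (odMZ m) := by
  funext i j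
  simp [odM, odMZ, zcM, apply_ite (fun z : ℤ => (z : ℚ))]

lemma mul_cast (x y : M3Z) : zcM x * zcM y = zcM (x * y) := by
  funext i j
  simp [zcM, Matrix.mul_apply]

lemma sbr_cast (x y : M3Z) : sbr (zcM x) (zcM y) = zcM (sbrZ x y) := by
  unfold sbr sbrZ
  rw [evM_cast, odM_cast, evM_cast, odM_cast, mul_cast, mul_cast, mul_cast, mul_cast]
  funext i j
  simp [zcM]

lemma act_cast (g : M3Z) (t : T3Z) : act (zcM g) (zcT t) = zcT (actZ g t) := by
  funext i j k l
  have h1 : ∀ k l, (Matrix.of fun a b => zcT t a b k l) = zcM (Matrix.of fun a b => t a b k l) := by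
    intro k l; funext a b; simp [zcT, zcM]
  have h2 : (Matrix.of fun a b => zcT t i j a b) = zcM (Matrix.of fun a b => t i j a b) := by
    funext a b; simp [zcT, zcM]
  simp only [act, actZ, h1, h2, evM_cast, odM_cast, sbr_cast, sgn_cast]
  simp only [zcT, zcM, Matrix.of_apply, actZ]
  push_cast
  ring

lemma Eu_cast (i j : Fin 3) : Eu i j = zcM (EuZ i j) := by
  funext a b
  simp [Eu, EuZ, zcM, Matrix.single, apply_ite (fun z : ℤ => (z : ℚ))]

lemma A3_cast : A3 = zcM A3Z := by
  funext a b
  simp [A3, A3Z, Eu, EuZ, zcM, Matrix.single, apply_ite (fun z : ℤ => (z : ℚ))]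

lemma B3_cast : B3 = zcM B3Z := by
  funext a b
  simp [B3, B3Z, Eu, EuZ, zcM, Matrix.single, apply_ite (fun z : ℤ => (z : ℚ))]

lemma neg_zcM (m : M3Z) : -zcM m = zcM (-m) := by
  funext a b; simp [zcM]

lemma tm_cast (a b : M3Z) : tm (zcM a) (zcM b) = zcT (tmZ a b) := by
  funext i j k l; simp [tm, tmZ, zcT, zcM]

lemma TsM_cast (t : T3Z) : TsM (zcT t) = zcT (TsMZ t) := by
  funext i j k l; simp [TsM, TsMZ, zcT, sgn_cast]

lemma wdg_cast (a b : M3Z) : wdg (zcM a) (zcM b) = zcT (wdgZ a b) := by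
  funext i j k l
  simp only [wdg, wdgZ, Pi.sub_apply]
  rw [tm_cast, TsM_cast]
  simp [zcT]

lemma rs_cast : rs = zcT rsZ := by
  unfold rs rsZ
  rw [B3_cast, A3_cast, Eu_cast 0 1, Eu_cast 1 0, Eu_cast 0 2, Eu_cast 2 0,
    Eu_cast 2 1, Eu_cast 1 2, neg_zcM, tm_cast, tm_cast, tm_cast, tm_cast]
  funext i j k l
  simp [zcT]

lemma Omega_cast : Omega = zcT OmegaZ := by
  unfold Omega OmegaZ
  rw [B3_cast, A3_cast, Eu_cast 0 1, Eu_cast 1 0, Eu_cast 0 2, Eu_cast 2 0,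
    Eu_cast 2 1, Eu_cast 1 2, neg_zcM, tm_cast, tm_cast, tm_cast, tm_cast,
    tm_cast, tm_cast, tm_cast, tm_cast]
  funext i j k l
  simp [zcT]

lemma zcT_zero_iff (t : T3Z) : zcT t = 0 ↔ t = 0 := by
  constructor
  · intro h
    funext i j k l
    have := congrFun (congrFun (congrFun (congrFun h i) j) k) l
    simpa [zcT] using this
  · rintro rfl
    funext i j k l; simp [zcT]

lemma zcT_inj {s t : T3Z} (h : s = t) : zcT s = zcT t := by rw [h]

lemma δs_cast (g : M3Z) : δs (zcM g) = zcT (actZ g rsZ) := by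
  unfold δs
  rw [rs_cast, act_cast]

end IntClones

/-- the values of the standard cocommutator δ_s, and r_s + T_s(r_s) = Ω -/
theorem stmt19 :
    δs A3 = 0 ∧
    δs B3 = 0 ∧
    δs (Eu 1 0) = wdg (Eu 1 0) A3 - wdg (Eu 1 2) (Eu 2 0) ∧
    δs (Eu 0 1) = wdg (Eu 0 1) (-B3) + wdg (Eu 0 2) (Eu 2 1) ∧
    δs (Eu 1 2) = 0 ∧
    δs (Eu 0 2) = 0 ∧
    δs (Eu 2 0) = wdg (Eu 2 0) A3 ∧
    δs (Eu 2 1) = wdg (Eu 2 1) (-B3) ∧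
    rs + TsM rs = Omega := by
  refine ⟨?_, ?_, ?_, ?_, ?_, ?_, ?_, ?_, ?_⟩
  · rw [A3_cast, δs_cast, zcT_zero_iff]; decide
  · rw [B3_cast, δs_cast, zcT_zero_iff]; decide
  · rw [Eu_cast 1 0, δs_cast, Eu_cast 1 2, Eu_cast 2 0, A3_cast,
      wdg_cast, wdg_cast]
    rw [show zcT (wdgZ (EuZ 1 0) A3Z) - zcT (wdgZ (EuZ 1 2) (EuZ 2 0))
        = zcT (wdgZ (EuZ 1 0) A3Z - wdgZ (EuZ 1 2) (EuZ 2 0)) from by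
      funext i j k l; simp [zcT]]
    exact zcT_inj (by decide)
  · rw [Eu_cast 0 1, δs_cast, Eu_cast 0 2, Eu_cast 2 1, B3_cast, neg_zcM,
      wdg_cast, wdg_cast]
    rw [show zcT (wdgZ (EuZ 0 1) (-B3Z)) + zcT (wdgZ (EuZ 0 2) (EuZ 2 1))
        = zcT (wdgZ (EuZ 0 1) (-B3Z) + wdgZ (EuZ 0 2) (EuZ 2 1)) from by
      funext i j k l; simp [zcT]]
    exact zcT_inj (by decide)
  · rw [Eu_cast 1 2, δs_cast, zcT_zero_iff]; decide
  · rw [Eu_cast 0 2, δs_cast, zcT_zero_iff]; decide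
  · rw [Eu_cast 2 0, δs_cast, A3_cast, wdg_cast]
    exact zcT_inj (by decide)
  · rw [Eu_cast 2 1, δs_cast, B3_cast, neg_zcM, wdg_cast]
    exact zcT_inj (by decide)
  · rw [rs_cast, Omega_cast, TsM_cast,
      show zcT rsZ + zcT (TsMZ rsZ) = zcT (rsZ + TsMZ rsZ) from by
        funext i j k l; simp [zcT]]
    exact zcT_inj (by decide)
end
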